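/- For any n ≥ 9 there exists a tree T with n pendent vertices in which each stem vertex has degree 4 or 5, each stem vertex is incident to exactly one internal vertex, and every non-stem internal vertex has degree 3; any such tree satisfies M_2(T) = 11n - 27. -/

import Mathlib

open scoped Classical
open Finset
set_option linter.unusedSectionVars false
set_option linter.unusedVariables false
set_option maxHeartbeats 1000000



namespace StemAux

/-- Double counting for a relation between two finsets. -/
lemma double_count {V : Type*} [DecidableEq V] (A B : Finset V) (R : V → V → Prop)
    [DecidableRel R] :
    ∑ u ∈ A, (B.filter (fun b => R u b)).card = ∑ b ∈ B, (A.filter (fun a => R a b)).card := by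
  simp only [Finset.card_filter]
  exact Finset.sum_comm

/-- Closed sets under adjacency in a preconnected graph are everything. -/
lemma closure {V : Type*} {G : SimpleGraph V} (hc : G.Preconnected) (A : Set V)
    (hA : ∀ x ∈ A, ∀ y, G.Adj x y → y ∈ A) {a : V} (ha : a ∈ A) : ∀ v, v ∈ A := by
  have key : ∀ {x y : V} (_ : G.Walk x y), x ∈ A → y ∈ A := by
    intro x y w
    induction w with
    | nil => exact id
    | cons h p ih => intro hx; exact ih (hA _ hx _ h)
  intro v
  obtain ⟨w⟩ := hc a v
  exact key w ha

/-- Edge sum as a sum over vertices of sums over neighborhoods. -/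
lemma two_mul_edge_sum {V : Type*} [Fintype V] [DecidableEq V] (G : SimpleGraph V)
    [DecidableRel G.Adj] (F : V → V → ℤ) (hF : ∀ u v, F u v = F v u) :
    2 * ∑ e ∈ G.edgeFinset, Sym2.lift ⟨F, fun u v => hF u v⟩ e =
      ∑ v, ∑ u ∈ G.neighborFinset v, F v u := by
  classical
  have h1 : ∑ v, ∑ u ∈ G.neighborFinset v, F v u
      = ∑ p ∈ (Finset.univ ×ˢ Finset.univ).filter (fun p : V × V => G.Adj p.1 p.2),
          F p.1 p.2 := by
    rw [Finset.sum_filter, Finset.sum_product]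
    refine Finset.sum_congr rfl fun v _ => ?_
    rw [SimpleGraph.neighborFinset_eq_filter, Finset.sum_filter]
  rw [h1]
  have hmaps : ∀ p ∈ (Finset.univ ×ˢ Finset.univ).filter (fun p : V × V => G.Adj p.1 p.2),
      Sym2.mk p.1 p.2 ∈ G.edgeFinset := by
    intro p hp
    simp only [Finset.mem_filter] at hp
    simpa [SimpleGraph.mem_edgeFinset] using hp.2
  rw [← Finset.sum_fiberwise_of_maps_to hmaps (fun p => F p.1 p.2)]
  rw [Finset.mul_sum]
  refine Finset.sum_congr rfl fun e he => ?_
  rw [SimpleGraph.mem_edgeFinset] at he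
  induction e with
  | _ u v =>
    have hadj : G.Adj u v := he
    have hfib : ((Finset.univ ×ˢ Finset.univ).filter
        (fun p : V × V => G.Adj p.1 p.2)).filter (fun p => Sym2.mk p.1 p.2 = s(u, v))
        = {(u, v), (v, u)} := by
      ext p
      obtain ⟨x, y⟩ := p
      simp only [Finset.mem_filter, Finset.mem_insert, Finset.mem_singleton,
        Finset.mem_product, Finset.mem_univ, true_and, Sym2.eq_iff, Prod.mk.injEq]
      constructor
      · rintro ⟨_, (⟨rfl, rfl⟩ | ⟨rfl, rfl⟩)⟩
        · exact Or.inl ⟨rfl, rfl⟩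
        · exact Or.inr ⟨rfl, rfl⟩
      · rintro (⟨rfl, rfl⟩ | ⟨rfl, rfl⟩)
        · exact ⟨hadj, Or.inl ⟨rfl, rfl⟩⟩
        · exact ⟨hadj.symm, Or.inr ⟨rfl, rfl⟩⟩
    rw [hfib]
    rw [Finset.sum_pair (by simp [hadj.ne])]
    simp [Sym2.lift_mk, hF u v]
    ring





section Parent

variable {W : Type} [Fintype W] [DecidableEq W]
variable (f : W → W)

/-- The graph induced by a parent function. -/
def pgraph : SimpleGraph W where
  Adj x y := x ≠ y ∧ (f x = y ∨ f y = x)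
  symm := by
    refine ⟨?_⟩
    intro x y ⟨h1, h2⟩
    exact ⟨h1.symm, h2.symm⟩
  loopless := ⟨fun x h => h.1 rfl⟩

lemma pgraph_adj {x y : W} : (pgraph f).Adj x y ↔ x ≠ y ∧ (f x = y ∨ f y = x) := Iff.rfl

variable (rk : W → ℕ) (r : W)
variable (hr : f r = r) (hdec : ∀ x, x ≠ r → rk (f x) < rk x)

include hr hdec

lemma fix_eq_root {x : W} (h : f x = x) : x = r := by
  by_contra hx
  exact absurd (h ▸ hdec x hx) (lt_irrefl _)

lemma adj_parent {x : W} (hx : x ≠ r) : (pgraph f).Adj x (f x) := by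
  refine ⟨fun h => hx (fix_eq_root f rk r hr hdec h.symm), Or.inl rfl⟩

lemma reach_root : ∀ x : W, (pgraph f).Reachable x r := by
  have : ∀ m : ℕ, ∀ x : W, rk x ≤ m → (pgraph f).Reachable x r := by
    intro m
    induction m with
    | zero =>
      intro x hx
      by_cases h : x = r
      · subst h; exact SimpleGraph.Reachable.refl x
      · exact absurd (Nat.lt_of_lt_of_le (hdec x h) hx) (Nat.not_lt_zero _)
    | succ m ih =>
      intro x hx
      by_cases h : x = r
      · subst h; exact SimpleGraph.Reachable.refl x
      · exact ((adj_parent f rk r hr hdec h).reachable).trans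
          (ih (f x) (by have := hdec x h; omega))
  exact fun x => this (rk x) x le_rfl

lemma pgraph_connected : (pgraph f).Connected := by
  have : Nonempty W := ⟨r⟩
  exact ⟨fun x y => (reach_root f rk r hr hdec x).trans
    (reach_root f rk r hr hdec y).symm⟩

/-- Maximality forces edges at a local max to go down. -/
lemma adj_max {u w : W} (h : (pgraph f).Adj u w) (hle : rk w ≤ rk u) : f u = w := by
  rcases h.2 with h2 | h2
  · exact h2
  · by_cases hw : w = r
    · subst hw
      rw [hr] at h2
      exact absurd h2 h.ne'
    · exact absurd (lt_of_lt_of_le (h2 ▸ hdec w hw) hle) (lt_irrefl _)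

lemma pgraph_acyclic : (pgraph f).IsAcyclic := by
  intro v c hc
  -- choose max-rank vertex on the cycle
  obtain ⟨u, hu, hmax⟩ := Finset.exists_max_image c.support.toFinset rk
    ⟨v, by simp [SimpleGraph.Walk.start_mem_support]⟩
  rw [List.mem_toFinset] at hu
  -- rotate the cycle to start at u
  set c' : (pgraph f).Walk u u := c.rotate u hu with hc'def
  have hc' : c'.IsCycle := hc.rotate hu
  have hsupp : ∀ x ∈ c'.support, rk x ≤ rk u := by
    intro x hx
    apply hmax
    rw [List.mem_toFinset]
    rcases List.mem_cons.mp ((c'.support_eq_cons ▸ hx : x ∈ u :: c'.support.tail)) with h | h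
    · exact h ▸ hu
    · have := (SimpleGraph.Walk.support_rotate c u hu).mem_iff.mp h
      rw [c.support_eq_cons] at *
      exact List.mem_cons_of_mem _ this
  clear_value c'
  -- decompose the cycle
  cases c' with
  | nil => exact hc'.ne_nil rfl
  | cons h q =>
    rename_i b
    have hq : q.IsPath ∧ s(u, b) ∉ q.edges := (SimpleGraph.Walk.cons_isCycle_iff q h).mp hc'
    have hb : f u = b := by
      apply adj_max f rk r hr hdec h
      apply hsupp
      simp [SimpleGraph.Walk.support_cons, q.start_mem_support]
    -- last edge of q enters u
    have hbu : b ≠ u := h.ne'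
    obtain ⟨a, ha, q2, hq2⟩ := q.reverse.exists_eq_cons_of_ne (Ne.symm hbu)
    · have hadj : (pgraph f).Adj u a := ha
      have haq : a ∈ q.support := by
        have : a ∈ q.reverse.support := by rw [hq2]; simp [SimpleGraph.Walk.support_cons, q2.start_mem_support]
        simpa using this
      have hasup : a ∈ (SimpleGraph.Walk.cons h q).support := by
        simp [SimpleGraph.Walk.support_cons]
        exact Or.inr haq
      have hfa : f u = a := adj_max f rk r hr hdec hadj (hsupp a hasup)
      have hab : a = b := by rw [← hfa, hb]
      -- the edge s(u,a) is in q.edges, contradiction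
      have hedge : s(u, a) ∈ q.reverse.edges := by
        rw [hq2]; simp [SimpleGraph.Walk.edges_cons]
      rw [SimpleGraph.Walk.edges_reverse, List.mem_reverse] at hedge
      rw [hab] at hedge
      exact hq.2 hedge

lemma pgraph_isTree : (pgraph f).IsTree :=
  ⟨pgraph_connected f rk r hr hdec, pgraph_acyclic f rk r hr hdec⟩

lemma pgraph_degree (v : W) :
    (pgraph f).degree v =
      (Finset.univ.filter fun u => f u = v ∧ u ≠ v).card + (if v = r then 0 else 1) := by
  classical
  have key : ∀ u : W, (pgraph f).Adj v u ↔ ((f u = v ∧ u ≠ v) ∨ (v ≠ r ∧ u = f v)) := by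
    intro u
    constructor
    · rintro ⟨hne, h | h⟩
      · refine Or.inr ⟨?_, h.symm⟩
        intro hv; subst hv
        rw [hr] at h
        exact hne h
      · exact Or.inl ⟨h, fun he => hne he.symm⟩
    · rintro (⟨h1, h2⟩ | ⟨h1, h2⟩)
      · exact ⟨fun he => h2 he.symm, Or.inr h1⟩
      · subst h2
        refine ⟨fun he => ?_, Or.inl rfl⟩
        exact h1 (fix_eq_root f rk r hr hdec he.symm)
  rw [← SimpleGraph.card_neighborFinset_eq_degree, SimpleGraph.neighborFinset_eq_filter]
  have : Finset.univ.filter (fun u => (pgraph f).Adj v u)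
      = (Finset.univ.filter fun u => f u = v ∧ u ≠ v)
        ∪ (Finset.univ.filter fun u => v ≠ r ∧ u = f v) := by
    rw [← Finset.filter_or]
    exact Finset.filter_congr fun u _ => by rw [key u]
  rw [this, Finset.card_union_of_disjoint]
  · congr 1
    by_cases hv : v = r
    · simp [hv]
    · rw [if_neg hv]
      have : (Finset.univ.filter fun u : W => v ≠ r ∧ u = f v) = {f v} := by
        ext u
        simp [hv]
      rw [this, Finset.card_singleton]
  · rw [Finset.disjoint_filter]
    rintro u _ ⟨h1, h2⟩ ⟨h3, h4⟩
    subst h4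
    -- f (f v) = v, f v ≠ v, v ≠ r : impossible by rank
    have hvr : v ≠ r := h3
    have hfv : f v ≠ r := by
      intro he
      rw [he, hr] at h1
      exact hvr h1.symm
    have l1 := hdec v hvr
    have l2 := hdec (f v) hfv
    rw [h1] at l2
    omega

end Parent







/-- Card of a filter over `Fin m` of a predicate on values, via an explicit list. -/
lemma card_filter_fin (m : ℕ) (P : ℕ → Prop) [DecidablePred P] (l : List ℕ)
    (hl : l.Nodup) (h : ∀ v, v < m → (P v ↔ v ∈ l)) (hlm : ∀ v ∈ l, v < m) :
    (Finset.univ.filter fun x : Fin m => P x.val).card = l.length := by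
  rw [← List.toFinset_card_of_nodup hl]
  apply Finset.card_bij (fun x _ => x.val)
  · intro x hx
    rw [Finset.mem_filter] at hx
    rw [List.mem_toFinset]
    exact (h x.val x.isLt).mp hx.2
  · intro x _ y _ hxy
    exact Fin.ext hxy
  · intro v hv
    rw [List.mem_toFinset] at hv
    refine ⟨⟨v, hlm v hv⟩, ?_, rfl⟩
    rw [Finset.mem_filter]
    exact ⟨Finset.mem_univ _, (h v (hlm v hv)).mpr hv⟩

section Cons

variable (a b i : ℕ)

/-- Number of vertices: internals, stems, leaves. -/
def m : ℕ := i + (a + b) + (3 * a + 4 * b)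

/-- The parent function on values. -/
def F (v : ℕ) : ℕ :=
  if v < i then v - 1
  else if v < i + (a + b) then min (v - i - 1) (i - 1)
  else i + (if v - i - (a + b) < 3 * a then (v - i - (a + b)) / 3
            else a + (v - i - (a + b) - 3 * a) / 4)

lemma F_class (hi : 1 ≤ i) (v : ℕ) (hv : v < m a b i) :
    (v < i + (a + b) ∧ F a b i v < i) ∨
      (i + (a + b) ≤ v ∧ i ≤ F a b i v ∧ F a b i v < i + (a + b)) := by
  unfold F m at *
  split
  · left; constructor <;> omega
  · split
    · left; constructor <;> omega
    · right
      refine ⟨by omega, ?_⟩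
      split <;> omega

lemma F_lt (v : ℕ) (hv : v < m a b i) : F a b i v < m a b i := by
  unfold F m at *
  split
  · omega
  · split
    · omega
    · split <;> omega

lemma F_dec (v : ℕ) (hv : v < m a b i) (h0 : 0 < v) : F a b i v < v := by
  unfold F m at *
  split
  · omega
  · split
    · omega
    · split <;> omega

/-- The parent function. -/
def f : Fin (m a b i) → Fin (m a b i) := fun x => ⟨F a b i x.val, F_lt a b i x.val x.isLt⟩

lemma hm_pos (hi : 1 ≤ i) : 0 < m a b i := by unfold m; omega

/-- The root. -/
def r (hi : 1 ≤ i) : Fin (m a b i) := ⟨0, hm_pos a b i hi⟩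

lemma hf_r (hi : 1 ≤ i) : f a b i (r a b i hi) = r a b i hi := by
  apply Fin.ext
  show F a b i 0 = 0
  unfold F
  split
  · omega
  · split <;> omega

lemma hf_dec (hi : 1 ≤ i) : ∀ x : Fin (m a b i), x ≠ r a b i hi → (f a b i x).val < x.val := by
  intro x hx
  have h0 : 0 < x.val := by
    rcases Nat.eq_zero_or_pos x.val with h | h
    · exact absurd (Fin.ext h : x = r a b i hi) hx
    · exact h
  exact F_dec a b i x.val x.isLt h0

end Cons



section Degrees

variable (a b i : ℕ)

/-- Abbreviation for the constructed graph. -/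
abbrev G' : SimpleGraph (Fin (m a b i)) := pgraph (f a b i)

lemma G'_degree (hi : 1 ≤ i) (x : Fin (m a b i)) :
    (G' a b i).degree x =
      (Finset.univ.filter fun v : Fin (m a b i) =>
        F a b i v.val = x.val ∧ v.val ≠ x.val).card + (if x.val = 0 then 0 else 1) := by
  rw [pgraph_degree (f a b i) Fin.val (r a b i hi) (hf_r a b i hi) (hf_dec a b i hi)]
  congr 1
  · apply congrArg
    apply Finset.filter_congr
    intro v _
    constructor
    · rintro ⟨h1, h2⟩
      exact ⟨congrArg Fin.val h1, fun he => h2 (Fin.ext he)⟩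
    · rintro ⟨h1, h2⟩
      exact ⟨Fin.ext h1, fun he => h2 (congrArg Fin.val he)⟩
  · have : x = r a b i hi ↔ x.val = 0 := ⟨fun h => congrArg Fin.val h, fun h => Fin.ext h⟩
    simp only [this]

lemma deg_leaf (hi : 1 ≤ i) (x : Fin (m a b i)) (hx : i + (a + b) ≤ x.val) :
    (G' a b i).degree x = 1 := by
  rw [G'_degree a b i hi x]
  have h1 : (Finset.univ.filter fun v : Fin (m a b i) =>
      F a b i v.val = x.val ∧ v.val ≠ x.val).card = ([] : List ℕ).length := by
    refine card_filter_fin (m a b i) (fun w => F a b i w = x.val ∧ w ≠ x.val) _ ?_ ?_ ?_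
    · exact List.nodup_nil
    · intro v hv
      simp only [List.not_mem_nil, iff_false, not_and]
      intro h
      rcases F_class a b i hi v hv with ⟨_, h2⟩ | ⟨_, _, h2⟩ <;> omega
    · intro v hv; simp at hv
  rw [h1]
  have : ¬ x.val = 0 := by unfold m at *; omega
  simp [this]

lemma deg_stem4 (hi : 1 ≤ i) (hs : a + b = i + 2) (x : Fin (m a b i))
    (hx1 : i ≤ x.val) (hx2 : x.val < i + a) :
    (G' a b i).degree x = 4 := by
  rw [G'_degree a b i hi x]
  set k := x.val - i with hk
  have h1 : (Finset.univ.filter fun v : Fin (m a b i) =>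
      F a b i v.val = x.val ∧ v.val ≠ x.val).card
      = ([i + (a+b) + 3*k, i + (a+b) + 3*k + 1, i + (a+b) + 3*k + 2] : List ℕ).length := by
    refine card_filter_fin (m a b i) (fun w => F a b i w = x.val ∧ w ≠ x.val) _ ?_ ?_ ?_
    · simp; try omega
    · intro v hv
      unfold m at hv
      simp only [List.mem_cons, List.not_mem_nil, or_false]
      unfold F
      split_ifs <;> omega
    · intro v hv
      simp only [List.mem_cons, List.not_mem_nil, or_false] at hv
      unfold m; omega
  rw [h1]
  have : ¬ x.val = 0 := by omega
  simp [this]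

lemma deg_stem5 (hi : 1 ≤ i) (hs : a + b = i + 2) (x : Fin (m a b i))
    (hx1 : i + a ≤ x.val) (hx2 : x.val < i + (a + b)) :
    (G' a b i).degree x = 5 := by
  rw [G'_degree a b i hi x]
  set t := x.val - i - a with ht
  have h1 : (Finset.univ.filter fun v : Fin (m a b i) =>
      F a b i v.val = x.val ∧ v.val ≠ x.val).card
      = ([i + (a+b) + 3*a + 4*t, i + (a+b) + 3*a + 4*t + 1,
          i + (a+b) + 3*a + 4*t + 2, i + (a+b) + 3*a + 4*t + 3] : List ℕ).length := by
    refine card_filter_fin (m a b i) (fun w => F a b i w = x.val ∧ w ≠ x.val) _ ?_ ?_ ?_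
    · simp; try omega
    · intro v hv
      unfold m at hv
      simp only [List.mem_cons, List.not_mem_nil, or_false]
      unfold F
      split_ifs <;> omega
    · intro v hv
      simp only [List.mem_cons, List.not_mem_nil, or_false] at hv
      unfold m; omega
  rw [h1]
  have : ¬ x.val = 0 := by omega
  simp [this]

lemma deg_int (hi : 1 ≤ i) (hs : a + b = i + 2) (x : Fin (m a b i))
    (hx : x.val < i) : (G' a b i).degree x = 3 := by
  rw [G'_degree a b i hi x]
  rcases Nat.lt_or_ge i 2 with hi2 | hi2
  · -- i = 1, x.val = 0, children are the three stems
    have h1 : (Finset.univ.filter fun v : Fin (m a b i) =>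
        F a b i v.val = x.val ∧ v.val ≠ x.val).card = ([1, 2, 3] : List ℕ).length := by
      refine card_filter_fin (m a b i) (fun w => F a b i w = x.val ∧ w ≠ x.val) _ ?_ ?_ ?_
      · simp
      · intro v hv
        unfold m at hv
        simp only [List.mem_cons, List.not_mem_nil, or_false]
        unfold F
        split_ifs <;> omega
      · intro v hv
        simp only [List.mem_cons, List.not_mem_nil, or_false] at hv
        unfold m; omega
    rw [h1]
    have : x.val = 0 := by omega
    simp [this]
  · rcases Nat.eq_zero_or_pos x.val with hx0 | hx0
    · -- root: children 1, i, i+1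
      have h1 : (Finset.univ.filter fun v : Fin (m a b i) =>
          F a b i v.val = x.val ∧ v.val ≠ x.val).card = ([1, i, i+1] : List ℕ).length := by
        refine card_filter_fin (m a b i) (fun w => F a b i w = x.val ∧ w ≠ x.val) _ ?_ ?_ ?_
        · simp; try omega
        · intro v hv
          unfold m at hv
          simp only [List.mem_cons, List.not_mem_nil, or_false]
          unfold F
          split_ifs <;> omega
        · intro v hv
          simp only [List.mem_cons, List.not_mem_nil, or_false] at hv
          unfold m; omega
      rw [h1]
      simp [hx0]
    · rcases Nat.lt_or_ge x.val (i-1) with hxm | hxm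
      · -- middle: children x.val+1, i+x.val+1
        have h1 : (Finset.univ.filter fun v : Fin (m a b i) =>
            F a b i v.val = x.val ∧ v.val ≠ x.val).card
            = ([x.val + 1, i + x.val + 1] : List ℕ).length := by
          refine card_filter_fin (m a b i) (fun w => F a b i w = x.val ∧ w ≠ x.val) _ ?_ ?_ ?_
          · simp; try omega
          · intro v hv
            unfold m at hv
            simp only [List.mem_cons, List.not_mem_nil, or_false]
            unfold F
            split_ifs <;> omega
          · intro v hv
            simp only [List.mem_cons, List.not_mem_nil, or_false] at hv
            unfold m; omega
        rw [h1]
        have : ¬ x.val = 0 := by omega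
        simp [this]
      · -- last internal: children 2i, 2i+1
        have h1 : (Finset.univ.filter fun v : Fin (m a b i) =>
            F a b i v.val = x.val ∧ v.val ≠ x.val).card
            = ([2*i, 2*i + 1] : List ℕ).length := by
          refine card_filter_fin (m a b i) (fun w => F a b i w = x.val ∧ w ≠ x.val) _ ?_ ?_ ?_
          · simp
          · intro v hv
            unfold m at hv
            simp only [List.mem_cons, List.not_mem_nil, or_false]
            unfold F
            split_ifs <;> omega
          · intro v hv
            simp only [List.mem_cons, List.not_mem_nil, or_false] at hv
            unfold m; omega
        rw [h1]
        have : ¬ x.val = 0 := by omega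
        simp [this]

end Degrees


section Part1

variable (a b i : ℕ)

lemma G'_adj (x y : Fin (m a b i)) :
    (G' a b i).Adj x y ↔ x ≠ y ∧ (f a b i x = y ∨ f a b i y = x) := Iff.rfl

lemma fval (x : Fin (m a b i)) : (f a b i x).val = F a b i x.val := rfl

lemma deg_class (hi : 1 ≤ i) (hs : a + b = i + 2) (x : Fin (m a b i)) :
    (x.val < i ∧ (G' a b i).degree x = 3) ∨
    (i ≤ x.val ∧ x.val < i + (a + b) ∧
      ((G' a b i).degree x = 4 ∨ (G' a b i).degree x = 5)) ∨
    (i + (a + b) ≤ x.val ∧ (G' a b i).degree x = 1) := by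
  rcases Nat.lt_or_ge x.val i with h | h
  · exact Or.inl ⟨h, deg_int a b i hi hs x h⟩
  rcases Nat.lt_or_ge x.val (i + (a + b)) with h2 | h2
  · refine Or.inr (Or.inl ⟨h, h2, ?_⟩)
    rcases Nat.lt_or_ge x.val (i + a) with h3 | h3
    · exact Or.inl (deg_stem4 a b i hi hs x h h3)
    · exact Or.inr (deg_stem5 a b i hi hs x h3 h2)
  · exact Or.inr (Or.inr ⟨h2, deg_leaf a b i hi x h2⟩)

theorem part1 (n : ℕ) (hn : 9 ≤ n) :
    ∃ (M : ℕ) (G : SimpleGraph (Fin M)),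
      G.IsTree ∧ (Finset.univ.filter fun v => G.degree v = 1).card = n ∧
      (∀ v, 2 ≤ G.degree v → (∃ u, G.Adj v u ∧ G.degree u = 1) →
        (G.degree v = 4 ∨ G.degree v = 5) ∧
        (Finset.univ.filter fun u => G.Adj v u ∧ 2 ≤ G.degree u).card = 1) ∧
      (∀ v, 2 ≤ G.degree v → ¬(∃ u, G.Adj v u ∧ G.degree u = 1) → G.degree v = 3) := by
  obtain ⟨a, b, i, hi, hs, hab⟩ : ∃ a b i : ℕ, 1 ≤ i ∧ a + b = i + 2 ∧ 3 * a + 4 * b = n := by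
    refine ⟨n / 3 - n % 3, n % 3, n / 3 - 2, ?_, ?_, ?_⟩ <;> omega
  refine ⟨m a b i, G' a b i, ?_, ?_, ?_, ?_⟩
  · exact pgraph_isTree (f a b i) Fin.val (r a b i hi) (hf_r a b i hi) (hf_dec a b i hi)
  · -- leaf count
    have he : (Finset.univ.filter fun v : Fin (m a b i) => (G' a b i).degree v = 1)
        = Finset.univ.filter fun v : Fin (m a b i) => i + (a + b) ≤ v.val := by
      apply Finset.filter_congr
      intro x _
      rcases deg_class a b i hi hs x with ⟨h1, h2⟩ | ⟨h1, h2, h3⟩ | ⟨h1, h2⟩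
      · constructor
        · intro h; omega
        · intro h; omega
      · constructor
        · intro h; omega
        · intro h; omega
      · simp [h1, h2]
    rw [he]
    have := card_filter_fin (m a b i) (fun w => i + (a + b) ≤ w)
      (List.range' (i + (a + b)) (3 * a + 4 * b))
      (by exact List.nodup_range' _ (by norm_num))
      (by intro v hv; rw [List.mem_range'_1]; unfold m at hv; omega)
      (by intro v hv; rw [List.mem_range'_1] at hv; unfold m; omega)
    rw [this, List.length_range']
    exact hab
  · -- stem condition
    intro v h2 hleaf
    rcases deg_class a b i hi hs v with ⟨h1, hdeg⟩ | ⟨hl, hr2, hdeg⟩ | ⟨h1, hdeg⟩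
    · -- internal: has no leaf neighbor, contradiction
      exfalso
      obtain ⟨u, hadj, hdeg1⟩ := hleaf
      rcases deg_class a b i hi hs u with ⟨g1, g2⟩ | ⟨g1, g2, g3⟩ | ⟨g1, g2⟩
      · omega
      · omega
      · -- u is a leaf; but leaves have parents in the stem range
        rcases hadj.2 with hf | hf
        · -- f v = u : F v.val < i, contradiction with u.val ≥ i+(a+b)
          have : (f a b i v).val = u.val := congrArg Fin.val hf
          rw [fval] at this
          rcases F_class a b i hi v.val v.isLt with ⟨_, hc⟩ | ⟨hc, _, _⟩ <;> omega
        · -- f u = v : F u.val ∈ [i, i+(a+b)) since u is a leaf, but v.val < i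
          have : (f a b i u).val = v.val := congrArg Fin.val hf
          rw [fval] at this
          rcases F_class a b i hi u.val u.isLt with ⟨hc, _⟩ | ⟨_, hc, _⟩ <;> omega
    · -- stem
      refine ⟨hdeg, ?_⟩
      have hvr : v ≠ r a b i hi := by
        intro h
        have : v.val = 0 := congrArg Fin.val h
        omega
      have hfv : (f a b i v).val < i := by
        rw [fval]
        rcases F_class a b i hi v.val v.isLt with ⟨_, hc⟩ | ⟨hc, _, _⟩ <;> omega
      have hfvdeg : (G' a b i).degree (f a b i v) = 3 := deg_int a b i hi hs _ hfv
      have hadjp : (G' a b i).Adj v (f a b i v) :=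
        adj_parent (f a b i) Fin.val (r a b i hi) (hf_r a b i hi) (hf_dec a b i hi) hvr
      have : (Finset.univ.filter fun u => (G' a b i).Adj v u ∧ 2 ≤ (G' a b i).degree u)
          = {f a b i v} := by
        ext u
        simp only [Finset.mem_filter, Finset.mem_univ, true_and, Finset.mem_singleton]
        constructor
        · rintro ⟨hadj, hdu⟩
          rcases hadj.2 with hf | hf
          · exact hf.symm
          · exfalso
            have hval : (f a b i u).val = v.val := congrArg Fin.val hf
            rw [fval] at hval
            rcases F_class a b i hi u.val u.isLt with ⟨_, hc⟩ | ⟨hc, _, _⟩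
            · omega
            · have := deg_leaf a b i hi u (by omega)
              omega
        · rintro rfl
          rw [hfvdeg]
          exact ⟨hadjp, by omega⟩
      rw [this, Finset.card_singleton]
    · omega
  · -- non-stem internal condition
    intro v h2 hnl
    rcases deg_class a b i hi hs v with ⟨h1, hdeg⟩ | ⟨hl, hr2, hdeg⟩ | ⟨h1, hdeg⟩
    · exact hdeg
    · -- stem: it has a leaf child, contradiction
      exfalso
      apply hnl
      rcases Nat.lt_or_ge v.val (i + a) with hva | hva
      · refine ⟨⟨i + (a + b) + 3 * (v.val - i), by unfold m; omega⟩, ?_, ?_⟩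
        · refine ⟨?_, Or.inr ?_⟩
          · intro h
            have := congrArg Fin.val h
            simp only at this
            omega
          · apply Fin.ext
            rw [fval]
            show F a b i (i + (a + b) + 3 * (v.val - i)) = v.val
            unfold F
            split_ifs <;> omega
        · exact deg_leaf a b i hi _ (by simp; try omega)
      · refine ⟨⟨i + (a + b) + 3 * a + 4 * (v.val - i - a), by unfold m; omega⟩, ?_, ?_⟩
        · refine ⟨?_, Or.inr ?_⟩
          · intro h
            have := congrArg Fin.val h
            simp only at this
            omega
          · apply Fin.ext
            rw [fval]
            show F a b i (i + (a + b) + 3 * a + 4 * (v.val - i - a)) = v.val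
            unfold F
            split_ifs <;> omega
        · exact deg_leaf a b i hi _ (by simp; try omega)
    · omega

end Part1



section Part2

variable {V : Type} [Fintype V] [DecidableEq V] (G : SimpleGraph V) [DecidableRel G.Adj]

set_option maxHeartbeats 2000000 in
theorem part2 (n : ℕ) (hn : 9 ≤ n)
    (hT : G.IsTree) (hL : (Finset.univ.filter fun v => G.degree v = 1).card = n)
    (hstem : ∀ v : V, 2 ≤ G.degree v → (∃ u, G.Adj v u ∧ G.degree u = 1) →
        (G.degree v = 4 ∨ G.degree v = 5) ∧
        (Finset.univ.filter fun u => G.Adj v u ∧ 2 ≤ G.degree u).card = 1)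
    (hint : ∀ v : V, 2 ≤ G.degree v → ¬(∃ u, G.Adj v u ∧ G.degree u = 1) → G.degree v = 3) :
    ∑ e ∈ G.edgeFinset,
        Sym2.lift ⟨fun u v => (G.degree u : ℤ) * (G.degree v : ℤ),
          fun u v => mul_comm _ _⟩ e = 11 * (n : ℤ) - 27 := by
  classical
  have hconn : G.Connected := hT.isConnected
  have hVcard : 9 ≤ Fintype.card V := by
    have := Finset.card_filter_le (Finset.univ : Finset V) (fun v => G.degree v = 1)
    rw [hL, Finset.card_univ] at this
    omega
  have hdpos : ∀ v : V, 1 ≤ G.degree v := by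
    intro v
    obtain ⟨u, hu⟩ := Fintype.exists_ne_of_one_lt_card (by omega) v
    obtain ⟨w⟩ := hconn.preconnected v u
    cases w with
    | nil => exact absurd rfl hu.symm
    | cons h p =>
      have : 0 < G.degree v := G.degree_pos_iff_exists_adj v |>.mpr ⟨_, h⟩
      omega
  have hclass : ∀ v : V, G.degree v = 1 ∨ G.degree v = 3 ∨ G.degree v = 4 ∨ G.degree v = 5 := by
    intro v
    rcases Nat.lt_or_ge (G.degree v) 2 with h | h
    · have := hdpos v; omega
    · by_cases hx : ∃ u, G.Adj v u ∧ G.degree u = 1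
      · rcases (hstem v h hx).1 with h4 | h5
        · tauto
        · tauto
      · have := hint v h hx; tauto
  have hstem2 : ∀ v : V, (G.degree v = 4 ∨ G.degree v = 5) →
      (Finset.univ.filter fun u => G.Adj v u ∧ 2 ≤ G.degree u).card = 1 := by
    intro v hv
    refine (hstem v (by omega) ?_).2
    by_contra hx
    have := hint v (by omega) hx
    omega
  have hleafu : ∀ l : V, G.degree l = 1 → ∀ u w, G.Adj l u → G.Adj l w → u = w := by
    intro l h1 u w hu hw
    have hc : (G.neighborFinset l).card ≤ 1 := by
      rw [G.card_neighborFinset_eq_degree, h1]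
    exact Finset.card_le_one.mp hc u ((G.mem_neighborFinset l u).mpr hu) w
      ((G.mem_neighborFinset l w).mpr hw)
  have hex : ∀ l : V, ∃ u, G.Adj l u := by
    intro l
    have := hdpos l
    exact (G.degree_pos_iff_exists_adj l).mp (by omega)
  set nb : V → V := fun l => (hex l).choose with hnbdef
  have hnb : ∀ l, G.Adj l (nb l) := fun l => (hex l).choose_spec
  have hnbu : ∀ l, G.degree l = 1 → ∀ u, G.Adj l u → u = nb l :=
    fun l h1 u hu => hleafu l h1 u (nb l) hu (hnb l)
  have hnbdeg : ∀ l, G.degree l = 1 → (G.degree (nb l) = 4 ∨ G.degree (nb l) = 5) := by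
    intro l h1
    have hlw : G.Adj l (nb l) := hnb l
    rcases hclass (nb l) with h | h
    · exfalso
      have hcl : ∀ x ∈ ({l, nb l} : Set V), ∀ y, G.Adj x y → y ∈ ({l, nb l} : Set V) := by
        rintro x (rfl | hx) y hy
        · exact Or.inr (hnbu x h1 y hy)
        · rw [Set.mem_singleton_iff] at hx
          subst hx
          exact Or.inl (hleafu (nb l) h y l hy hlw.symm)
      have hA := closure hconn.preconnected _ hcl (Set.mem_insert l _)
      have hsub : (Finset.univ : Finset V) ⊆ {l, nb l} := by
        intro x _
        rcases hA x with h | h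
        · subst h; simp
        · rw [Set.mem_singleton_iff] at h; subst h; simp
      have := Finset.card_le_card hsub
      rw [Finset.card_univ] at this
      have := Finset.card_insert_le l ({nb l} : Finset V)
      simp at this
      omega
    · have h2 : 2 ≤ G.degree (nb l) := by omega
      exact (hstem (nb l) h2 ⟨l, hlw.symm, h1⟩).1
  -- no two adjacent stems
  have hnotwo : ∀ v u : V, G.Adj v u → (G.degree v = 4 ∨ G.degree v = 5) →
      (G.degree u = 4 ∨ G.degree u = 5) → False := by
    intro v u hadj hv hu
    have hvonly : ∀ w, G.Adj v w → w = u ∨ G.degree w = 1 := by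
      intro w hw
      by_cases h2 : 2 ≤ G.degree w
      · left
        have hcv := hstem2 v hv
        obtain ⟨x, hxe⟩ := Finset.card_eq_one.mp hcv
        have hwx : w = x := by
          have : w ∈ Finset.univ.filter fun z => G.Adj v z ∧ 2 ≤ G.degree z := by
            simp [hw, h2]
          rw [hxe] at this; simpa using this
        have hux : u = x := by
          have : u ∈ Finset.univ.filter fun z => G.Adj v z ∧ 2 ≤ G.degree z := by
            simp [hadj]; omega
          rw [hxe] at this; simpa using this
        rw [hwx, hux]
      · right; have := hdpos w; omega
    have huonly : ∀ w, G.Adj u w → w = v ∨ G.degree w = 1 := by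
      intro w hw
      by_cases h2 : 2 ≤ G.degree w
      · left
        have hcv := hstem2 u hu
        obtain ⟨x, hxe⟩ := Finset.card_eq_one.mp hcv
        have hwx : w = x := by
          have : w ∈ Finset.univ.filter fun z => G.Adj u z ∧ 2 ≤ G.degree z := by
            simp [hw, h2]
          rw [hxe] at this; simpa using this
        have hux : v = x := by
          have : v ∈ Finset.univ.filter fun z => G.Adj u z ∧ 2 ≤ G.degree z := by
            simp [hadj.symm]; omega
          rw [hxe] at this; simpa using this
        rw [hwx, hux]
      · right; have := hdpos w; omega
    set A : Set V := {x | x = v ∨ x = u ∨ G.Adj v x ∨ G.Adj u x} with hAdef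
    have hclosed : ∀ x ∈ A, ∀ y, G.Adj x y → y ∈ A := by
      rintro x (rfl | rfl | hx | hx) y hy
      · exact Or.inr (Or.inr (Or.inl hy))
      · exact Or.inr (Or.inr (Or.inr hy))
      · rcases hvonly x hx with rfl | h1
        · exact Or.inr (Or.inr (Or.inr hy))
        · exact Or.inl (hleafu x h1 y v hy hx.symm)
      · rcases huonly x hx with rfl | h1
        · exact Or.inr (Or.inr (Or.inl hy))
        · exact Or.inr (Or.inl (hleafu x h1 y u hy hx.symm))
    have hA := closure hconn.preconnected A hclosed (Or.inl rfl : v ∈ A)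
    have hsub : (Finset.univ.filter fun x => G.degree x = 1) ⊆
        ((G.neighborFinset v).erase u) ∪ ((G.neighborFinset u).erase v) := by
      intro x hx
      rw [Finset.mem_filter] at hx
      have hx1 := hx.2
      rcases hA x with rfl | rfl | h | h
      · omega
      · omega
      · apply Finset.mem_union_left
        apply Finset.mem_erase.mpr
        refine ⟨fun he => by subst he; omega, (G.mem_neighborFinset v x).mpr h⟩
      · apply Finset.mem_union_right
        apply Finset.mem_erase.mpr
        refine ⟨fun he => by subst he; omega, (G.mem_neighborFinset u x).mpr h⟩
    have hcard := Finset.card_le_card hsub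
    rw [hL] at hcard
    have h1 := Finset.card_union_le ((G.neighborFinset v).erase u) ((G.neighborFinset u).erase v)
    have h2 : ((G.neighborFinset v).erase u).card = G.degree v - 1 := by
      rw [Finset.card_erase_of_mem ((G.mem_neighborFinset v u).mpr hadj),
        G.card_neighborFinset_eq_degree]
    have h3 : ((G.neighborFinset u).erase v).card = G.degree u - 1 := by
      rw [Finset.card_erase_of_mem ((G.mem_neighborFinset u v).mpr hadj.symm),
        G.card_neighborFinset_eq_degree]
    omega
  have hstemnbr : ∀ v : V, (G.degree v = 4 ∨ G.degree v = 5) → ∀ u, G.Adj v u →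
      2 ≤ G.degree u → G.degree u = 3 := by
    intro v hv u hadj h2
    rcases hclass u with h | h | h | h
    · omega
    · exact h
    · exact absurd (hnotwo v u hadj hv (Or.inl h)) not_false
    · exact absurd (hnotwo v u hadj hv (Or.inr h)) not_false
  -- class finsets
  set L : Finset V := Finset.univ.filter (fun v => G.degree v = 1) with hLdef
  set I : Finset V := Finset.univ.filter (fun v => G.degree v = 3) with hIdef
  set S4 : Finset V := Finset.univ.filter (fun v => G.degree v = 4) with hS4def
  set S5 : Finset V := Finset.univ.filter (fun v => G.degree v = 5) with hS5def
  set S45 : Finset V := Finset.univ.filter (fun v => G.degree v = 4 ∨ G.degree v = 5)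
    with hS45def
  -- generic partition of a finset by the four degree classes
  have hpart : ∀ (s : Finset V) (g : V → ℤ), ∑ x ∈ s, g x =
      ∑ x ∈ s.filter (fun v => G.degree v = 1), g x +
      ∑ x ∈ s.filter (fun v => G.degree v = 3), g x +
      ∑ x ∈ s.filter (fun v => G.degree v = 4), g x +
      ∑ x ∈ s.filter (fun v => G.degree v = 5), g x := by
    intro s g
    rw [Finset.sum_filter, Finset.sum_filter, Finset.sum_filter, Finset.sum_filter,
      ← Finset.sum_add_distrib, ← Finset.sum_add_distrib, ← Finset.sum_add_distrib]
    apply Finset.sum_congr rfl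
    intro x _
    rcases hclass x with h | h | h | h <;> simp [h]
  have hpartc : ∀ s : Finset V, (s.card : ℤ) =
      ((s.filter (fun v => G.degree v = 1)).card : ℤ) +
      ((s.filter (fun v => G.degree v = 3)).card : ℤ) +
      ((s.filter (fun v => G.degree v = 4)).card : ℤ) +
      ((s.filter (fun v => G.degree v = 5)).card : ℤ) := by
    intro s
    have := hpart s (fun _ => (1 : ℤ))
    simpa using this
  have hconst : ∀ (s : Finset V) (k : ℕ), (∀ x ∈ s, G.degree x = k) →
      ∑ x ∈ s, (G.degree x : ℤ) = (k : ℤ) * s.card := by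
    intro s k hk
    calc ∑ x ∈ s, (G.degree x : ℤ) = ∑ _x ∈ s, (k : ℤ) :=
          Finset.sum_congr rfl fun x hx => by rw [hk x hx]
      _ = (k : ℤ) * s.card := by rw [Finset.sum_const]; push_cast; ring
  have hconstN : ∀ (s : Finset V) (k : ℕ) (c : ℕ), (∀ x ∈ s, G.degree x - 1 = c) →
      ∑ x ∈ s, (G.degree x - 1) = c * s.card := by
    intro s k c hk
    calc ∑ x ∈ s, (G.degree x - 1) = ∑ _x ∈ s, c :=
          Finset.sum_congr rfl fun x hx => by rw [hk x hx]
      _ = c * s.card := by rw [Finset.sum_const]; ring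
  -- total vertex count
  have hcardV : (Fintype.card V : ℤ) = (n : ℤ) + I.card + S4.card + S5.card := by
    have := hpartc Finset.univ
    rw [Finset.card_univ] at this
    rw [this, ← hLdef, ← hIdef, ← hS4def, ← hS5def]
    rw [hLdef, hL]
  -- handshake
  have hhs : ∑ v : V, (G.degree v : ℤ) + 2 = 2 * Fintype.card V := by
    have h1 := G.sum_degrees_eq_twice_card_edges
    have h2 := hT.card_edgeFinset
    have : ∑ v : V, (G.degree v : ℤ) = ((∑ v : V, G.degree v : ℕ) : ℤ) := by push_cast; rfl
    rw [this, h1]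
    push_cast
    omega
  have hsumdeg : ∑ v : V, (G.degree v : ℤ) =
      (n : ℤ) + 3 * I.card + 4 * S4.card + 5 * S5.card := by
    have := hpart Finset.univ (fun v => (G.degree v : ℤ))
    rw [this, ← hLdef, ← hIdef, ← hS4def, ← hS5def]
    have e1 : ∑ x ∈ L, (G.degree x : ℤ) = (1 : ℤ) * L.card :=
      hconst L 1 (fun x hx => by rw [hLdef, Finset.mem_filter] at hx; exact hx.2)
    have e3 : ∑ x ∈ I, (G.degree x : ℤ) = (3 : ℤ) * I.card :=
      hconst I 3 (fun x hx => by rw [hIdef, Finset.mem_filter] at hx; exact hx.2)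
    have e4 : ∑ x ∈ S4, (G.degree x : ℤ) = (4 : ℤ) * S4.card :=
      hconst S4 4 (fun x hx => by rw [hS4def, Finset.mem_filter] at hx; exact hx.2)
    have e5 : ∑ x ∈ S5, (G.degree x : ℤ) = (5 : ℤ) * S5.card :=
      hconst S5 5 (fun x hx => by rw [hS5def, Finset.mem_filter] at hx; exact hx.2)
    rw [e1, e3, e4, e5, hLdef, hL]
    push_cast
    ring
  -- leaf neighbours of a stem
  have hleafcard : ∀ t : V, (G.degree t = 4 ∨ G.degree t = 5) →
      ((G.neighborFinset t).filter (fun u => G.degree u = 1)).card + 1 = G.degree t := by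
    intro t ht
    have hsplit := Finset.card_filter_add_card_filter_not
      (s := G.neighborFinset t) (p := fun u => G.degree u = 1)
    have hneg : (G.neighborFinset t).filter (fun u => ¬ G.degree u = 1) =
        Finset.univ.filter (fun u => G.Adj t u ∧ 2 ≤ G.degree u) := by
      ext u
      simp only [Finset.mem_filter, SimpleGraph.mem_neighborFinset, Finset.mem_univ, true_and]
      constructor
      · rintro ⟨h1, h2⟩
        exact ⟨h1, by have := hdpos u; omega⟩
      · rintro ⟨h1, h2⟩
        exact ⟨h1, by omega⟩
    rw [hneg, hstem2 t ht, G.card_neighborFinset_eq_degree] at hsplit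
    exact hsplit
  have hfiber : ∀ t ∈ S45, (L.filter fun l => nb l = t) =
      (G.neighborFinset t).filter (fun u => G.degree u = 1) := by
    intro t ht
    ext x
    simp only [hLdef, Finset.mem_filter, Finset.mem_univ, true_and,
      SimpleGraph.mem_neighborFinset]
    constructor
    · rintro ⟨h1, h2⟩
      exact ⟨h2 ▸ (hnb x).symm, h1⟩
    · rintro ⟨h1, h2⟩
      exact ⟨h2, (hnbu x h2 t h1.symm).symm⟩
  have hmaps : ∀ l ∈ L, nb l ∈ S45 := by
    intro l hl
    rw [hLdef, Finset.mem_filter] at hl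
    rw [hS45def, Finset.mem_filter]
    exact ⟨Finset.mem_univ _, hnbdeg l hl.2⟩
  have hS45split : S45 = S4 ∪ S5 := by
    rw [hS45def, hS4def, hS5def, ← Finset.filter_or]
  have hS45disj : Disjoint S4 S5 := by
    rw [hS4def, hS5def]
    rw [Finset.disjoint_left]
    intro x hx hx2
    rw [Finset.mem_filter] at hx hx2
    omega
  -- n = 3 s4 + 4 s5
  have hn345 : (n : ℤ) = 3 * S4.card + 4 * S5.card := by
    have hco := Finset.card_eq_sum_card_fiberwise hmaps
    have : ∑ t ∈ S45, (L.filter fun l => nb l = t).card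
        = ∑ t ∈ S45, (G.degree t - 1) := by
      apply Finset.sum_congr rfl
      intro t ht
      rw [hfiber t ht]
      have ht45 : G.degree t = 4 ∨ G.degree t = 5 := by
        rw [hS45def, Finset.mem_filter] at ht; exact ht.2
      have := hleafcard t ht45
      omega
    rw [this, hS45split, Finset.sum_union hS45disj] at hco
    have e4 : ∑ t ∈ S4, (G.degree t - 1) = 3 * S4.card :=
      hconstN S4 4 3 (fun x hx => by rw [hS4def, Finset.mem_filter] at hx; omega)
    have e5 : ∑ t ∈ S5, (G.degree t - 1) = 4 * S5.card :=
      hconstN S5 5 4 (fun x hx => by rw [hS5def, Finset.mem_filter] at hx; omega)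
    rw [e4, e5] at hco
    rw [hLdef, hL] at hco
    push_cast [hco]
    ring
  -- inner sums
  set inr : V → ℤ := fun v => ∑ u ∈ G.neighborFinset v, (G.degree u : ℤ) with hinrdef
  have hnegf : ∀ t : V, (G.neighborFinset t).filter (fun u => ¬ G.degree u = 1) =
      Finset.univ.filter (fun u => G.Adj t u ∧ 2 ≤ G.degree u) := by
    intro t
    ext u
    simp only [Finset.mem_filter, SimpleGraph.mem_neighborFinset, Finset.mem_univ, true_and]
    constructor
    · rintro ⟨h1, h2⟩
      exact ⟨h1, by have := hdpos u; omega⟩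
    · rintro ⟨h1, h2⟩
      exact ⟨h1, by omega⟩
  have hinner_stem : ∀ t : V, (G.degree t = 4 ∨ G.degree t = 5) →
      inr t = (G.degree t : ℤ) + 2 := by
    intro t ht
    simp only [hinrdef]
    rw [← Finset.sum_filter_add_sum_filter_not (G.neighborFinset t) (fun u => G.degree u = 1)]
    have h1 : ∑ u ∈ (G.neighborFinset t).filter (fun u => G.degree u = 1), (G.degree u : ℤ)
        = (G.degree t : ℤ) - 1 := by
      rw [hconst _ 1 (fun x hx => (Finset.mem_filter.mp hx).2)]
      have := hleafcard t ht
      push_cast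
      omega
    have h2 : ∑ u ∈ (G.neighborFinset t).filter (fun u => ¬ G.degree u = 1), (G.degree u : ℤ)
        = 3 := by
      rw [hnegf t]
      obtain ⟨w, hw⟩ := Finset.card_eq_one.mp (hstem2 t ht)
      have hwmem : w ∈ Finset.univ.filter (fun u => G.Adj t u ∧ 2 ≤ G.degree u) := by
        rw [hw]; exact Finset.mem_singleton_self w
      rw [Finset.mem_filter] at hwmem
      rw [hw, Finset.sum_singleton, hstemnbr t ht w hwmem.2.1 hwmem.2.2]
      norm_num
    rw [h1, h2]
    ring
  have hNleaf : ∀ l : V, G.degree l = 1 → G.neighborFinset l = {nb l} := by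
    intro l h1
    apply Finset.eq_singleton_iff_unique_mem.mpr
    refine ⟨(G.mem_neighborFinset _ _).mpr (hnb l), fun x hx =>
      hnbu l h1 x ((G.mem_neighborFinset _ _).mp hx)⟩
  have hinner_leaf : ∀ l : V, G.degree l = 1 → inr l = (G.degree (nb l) : ℤ) := by
    intro l h1
    simp only [hinrdef]
    rw [hNleaf l h1, Finset.sum_singleton]
  -- sum over leaves
  have hsumL : ∑ l ∈ L, (G.degree l : ℤ) * inr l = 12 * S4.card + 20 * S5.card := by
    have step1 : ∑ l ∈ L, (G.degree l : ℤ) * inr l = ∑ l ∈ L, (G.degree (nb l) : ℤ) := by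
      apply Finset.sum_congr rfl
      intro l hl
      rw [hLdef, Finset.mem_filter] at hl
      rw [hinner_leaf l hl.2, hl.2]
      push_cast
      ring
    rw [step1]
    rw [← Finset.sum_fiberwise_of_maps_to hmaps (fun l => (G.degree (nb l) : ℤ))]
    have step2 : ∀ t ∈ S45, ∑ l ∈ L.filter (fun l => nb l = t), (G.degree (nb l) : ℤ)
        = ((G.degree t : ℤ) - 1) * (G.degree t : ℤ) := by
      intro t ht
      have e0 : ∑ l ∈ L.filter (fun l => nb l = t), (G.degree (nb l) : ℤ)
          = ∑ l ∈ L.filter (fun l => nb l = t), (G.degree t : ℤ) :=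
        Finset.sum_congr rfl fun l hl => by rw [(Finset.mem_filter.mp hl).2]
      have ht45 : G.degree t = 4 ∨ G.degree t = 5 := by
        rw [hS45def, Finset.mem_filter] at ht
        exact ht.2
      have hcfib : ((L.filter (fun l => nb l = t)).card : ℤ) = (G.degree t : ℤ) - 1 := by
        rw [hfiber t ht]
        have := hleafcard t ht45
        push_cast
        omega
      rw [e0, Finset.sum_const, nsmul_eq_mul, hcfib]
    rw [Finset.sum_congr rfl step2, hS45split, Finset.sum_union hS45disj]
    have e4 : ∑ t ∈ S4, ((G.degree t : ℤ) - 1) * (G.degree t : ℤ) = 12 * S4.card := by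
      calc ∑ t ∈ S4, ((G.degree t : ℤ) - 1) * (G.degree t : ℤ) = ∑ _t ∈ S4, (12 : ℤ) :=
            Finset.sum_congr rfl fun t ht => by
              rw [hS4def, Finset.mem_filter] at ht
              rw [ht.2]
              norm_num
        _ = 12 * S4.card := by rw [Finset.sum_const, nsmul_eq_mul]; ring
    have e5 : ∑ t ∈ S5, ((G.degree t : ℤ) - 1) * (G.degree t : ℤ) = 20 * S5.card := by
      calc ∑ t ∈ S5, ((G.degree t : ℤ) - 1) * (G.degree t : ℤ) = ∑ _t ∈ S5, (20 : ℤ) :=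
            Finset.sum_congr rfl fun t ht => by
              rw [hS5def, Finset.mem_filter] at ht
              rw [ht.2]
              norm_num
        _ = 20 * S5.card := by rw [Finset.sum_const, nsmul_eq_mul]; ring
    rw [e4, e5]
  -- swap to count from the other side
  have hflip : ∀ (s : Finset V) (u : V),
      s.filter (fun v => G.Adj v u) = s.filter (fun v => G.Adj u v) := by
    intro s u
    apply Finset.filter_congr
    intro x _
    rw [SimpleGraph.adj_comm]
  have hswap : ∑ v ∈ I, inr v
      = ∑ u : V, (G.degree u : ℤ) * ((I.filter (fun v => G.Adj u v)).card : ℤ) := by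
    have e1 : ∀ v : V, inr v = ∑ u : V, if G.Adj v u then (G.degree u : ℤ) else 0 := by
      intro v
      simp only [hinrdef]
      rw [SimpleGraph.neighborFinset_eq_filter, Finset.sum_filter]
    calc ∑ v ∈ I, inr v = ∑ v ∈ I, ∑ u : V, if G.Adj v u then (G.degree u : ℤ) else 0 :=
          Finset.sum_congr rfl fun v _ => e1 v
      _ = ∑ u : V, ∑ v ∈ I, if G.Adj v u then (G.degree u : ℤ) else 0 := Finset.sum_comm
      _ = ∑ u : V, (G.degree u : ℤ) * ((I.filter (fun v => G.Adj u v)).card : ℤ) := by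
          apply Finset.sum_congr rfl
          intro u _
          rw [← Finset.sum_filter, Finset.sum_const, nsmul_eq_mul, hflip]
          ring
  have hcI_leaf : ∀ u : V, G.degree u = 1 → (I.filter (fun v => G.Adj u v)) = ∅ := by
    intro u h1
    rw [Finset.eq_empty_iff_forall_notMem]
    intro v hv
    rw [Finset.mem_filter, hIdef, Finset.mem_filter] at hv
    have h3 : G.degree v = 3 := hv.1.2
    have := (hstem v (by omega) ⟨u, hv.2.symm, h1⟩).1
    omega
  have hcI_stem : ∀ u : V, (G.degree u = 4 ∨ G.degree u = 5) →
      (I.filter (fun v => G.Adj u v)).card = 1 := by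
    intro u hu
    have he : I.filter (fun v => G.Adj u v)
        = Finset.univ.filter (fun w => G.Adj u w ∧ 2 ≤ G.degree w) := by
      ext w
      simp only [Finset.mem_filter, hIdef, Finset.mem_univ, true_and]
      constructor
      · rintro ⟨h3, hadj⟩
        exact ⟨hadj, by omega⟩
      · rintro ⟨hadj, h2⟩
        exact ⟨hstemnbr u hu w hadj h2, hadj⟩
    rw [he, hstem2 u hu]
  have hIcount : ∀ u : V, G.degree u = 3 →
      ((I.filter (fun v => G.Adj u v)).card : ℤ)
        = 3 - ((S4.filter (fun v => G.Adj u v)).card : ℤ)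
          - ((S5.filter (fun v => G.Adj u v)).card : ℤ) := by
    intro u h3
    have hsplit := hpartc (G.neighborFinset u)
    have h1 : (G.neighborFinset u).filter (fun x => G.degree x = 1) = ∅ := by
      rw [Finset.eq_empty_iff_forall_notMem]
      intro x hx
      rw [Finset.mem_filter, SimpleGraph.mem_neighborFinset] at hx
      have := (hstem u (by omega) ⟨x, hx.1, hx.2⟩).1
      omega
    have hid : ∀ k : ℕ, (G.neighborFinset u).filter (fun x => G.degree x = k)
        = (Finset.univ.filter (fun v => G.degree v = k)).filter (fun v => G.Adj u v) := by
      intro k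
      ext w
      simp only [Finset.mem_filter, SimpleGraph.mem_neighborFinset, Finset.mem_univ, true_and]
      tauto
    rw [h1, hid 3, hid 4, hid 5, ← hIdef, ← hS4def, ← hS5def,
      G.card_neighborFinset_eq_degree, h3] at hsplit
    simp only [Finset.card_empty, Nat.cast_zero] at hsplit
    omega
  have hdc : ∀ (B : Finset V), ∑ u ∈ I, ((B.filter (fun v => G.Adj u v)).card)
      = ∑ b ∈ B, ((I.filter (fun v => G.Adj b v)).card) := by
    intro B
    have := double_count I B G.Adj
    rw [this]
    apply Finset.sum_congr rfl
    intro b _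
    rw [← hflip]
  have hXI : ∑ u ∈ I, ((I.filter (fun v => G.Adj u v)).card : ℤ)
      = 3 * I.card - S4.card - S5.card := by
    have e0 : ∑ u ∈ I, ((I.filter (fun v => G.Adj u v)).card : ℤ)
        = ∑ u ∈ I, (3 - ((S4.filter (fun v => G.Adj u v)).card : ℤ)
            - ((S5.filter (fun v => G.Adj u v)).card : ℤ)) := by
      apply Finset.sum_congr rfl
      intro u hu
      rw [hIdef, Finset.mem_filter] at hu
      exact hIcount u hu.2
    rw [e0]
    rw [Finset.sum_sub_distrib, Finset.sum_sub_distrib, Finset.sum_const, nsmul_eq_mul]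
    have c4 : ∑ u ∈ I, ((S4.filter (fun v => G.Adj u v)).card : ℤ) = S4.card := by
      have : ∑ u ∈ I, ((S4.filter (fun v => G.Adj u v)).card : ℤ)
          = ((∑ u ∈ I, (S4.filter (fun v => G.Adj u v)).card : ℕ) : ℤ) := by push_cast; rfl
      rw [this, hdc S4]
      have : ∑ b ∈ S4, ((I.filter (fun v => G.Adj b v)).card) = ∑ b ∈ S4, 1 := by
        apply Finset.sum_congr rfl
        intro b hb
        rw [hS4def, Finset.mem_filter] at hb
        exact hcI_stem b (Or.inl hb.2)
      rw [this]
      simp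
    have c5 : ∑ u ∈ I, ((S5.filter (fun v => G.Adj u v)).card : ℤ) = S5.card := by
      have : ∑ u ∈ I, ((S5.filter (fun v => G.Adj u v)).card : ℤ)
          = ((∑ u ∈ I, (S5.filter (fun v => G.Adj u v)).card : ℕ) : ℤ) := by push_cast; rfl
      rw [this, hdc S5]
      have : ∑ b ∈ S5, ((I.filter (fun v => G.Adj b v)).card) = ∑ b ∈ S5, 1 := by
        apply Finset.sum_congr rfl
        intro b hb
        rw [hS5def, Finset.mem_filter] at hb
        exact hcI_stem b (Or.inr hb.2)
      rw [this]
      simp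
    rw [c4, c5]
    ring
  -- evaluate X := ∑_{v ∈ I} inr v
  have hX : ∑ v ∈ I, inr v
      = 4 * S4.card + 5 * S5.card + 3 * (3 * I.card - S4.card - S5.card) := by
    rw [hswap]
    rw [hpart Finset.univ (fun u => (G.degree u : ℤ) * ((I.filter (fun v => G.Adj u v)).card : ℤ))]
    rw [← hLdef, ← hIdef, ← hS4def, ← hS5def]
    have eL : ∑ u ∈ L, (G.degree u : ℤ) * ((I.filter (fun v => G.Adj u v)).card : ℤ) = 0 := by
      apply Finset.sum_eq_zero
      intro u hu
      rw [hLdef, Finset.mem_filter] at hu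
      rw [hcI_leaf u hu.2]
      simp
    have eI : ∑ u ∈ I, (G.degree u : ℤ) * ((I.filter (fun v => G.Adj u v)).card : ℤ)
        = 3 * (3 * I.card - S4.card - S5.card) := by
      have : ∑ u ∈ I, (G.degree u : ℤ) * ((I.filter (fun v => G.Adj u v)).card : ℤ)
          = ∑ u ∈ I, 3 * ((I.filter (fun v => G.Adj u v)).card : ℤ) := by
        apply Finset.sum_congr rfl
        intro u hu
        rw [hIdef, Finset.mem_filter] at hu
        rw [hu.2]
        norm_num
      rw [this, ← Finset.mul_sum, hXI]
    have eS4 : ∑ u ∈ S4, (G.degree u : ℤ) * ((I.filter (fun v => G.Adj u v)).card : ℤ)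
        = 4 * S4.card := by
      have : ∑ u ∈ S4, (G.degree u : ℤ) * ((I.filter (fun v => G.Adj u v)).card : ℤ)
          = ∑ u ∈ S4, (4 : ℤ) := by
        apply Finset.sum_congr rfl
        intro u hu
        rw [hS4def, Finset.mem_filter] at hu
        rw [hu.2, hcI_stem u (Or.inl hu.2)]
        norm_num
      rw [this, Finset.sum_const, nsmul_eq_mul]
      ring
    have eS5 : ∑ u ∈ S5, (G.degree u : ℤ) * ((I.filter (fun v => G.Adj u v)).card : ℤ)
        = 5 * S5.card := by
      have : ∑ u ∈ S5, (G.degree u : ℤ) * ((I.filter (fun v => G.Adj u v)).card : ℤ)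
          = ∑ u ∈ S5, (5 : ℤ) := by
        apply Finset.sum_congr rfl
        intro u hu
        rw [hS5def, Finset.mem_filter] at hu
        rw [hu.2, hcI_stem u (Or.inr hu.2)]
        norm_num
      rw [this, Finset.sum_const, nsmul_eq_mul]
      ring
    rw [eL, eI, eS4, eS5]
    ring
  -- main double count
  have h2M := two_mul_edge_sum G (fun u v => (G.degree u : ℤ) * (G.degree v : ℤ))
    (fun u v => mul_comm _ _)
  have hmain2 : ∑ v : V, ∑ u ∈ G.neighborFinset v, (G.degree v : ℤ) * (G.degree u : ℤ)
      = ∑ v : V, (G.degree v : ℤ) * inr v := by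
    apply Finset.sum_congr rfl
    intro v _
    simp only [hinrdef]
    rw [Finset.mul_sum]
  rw [hmain2] at h2M
  -- split the total
  have hsplitall : ∑ v : V, (G.degree v : ℤ) * inr v
      = (12 * S4.card + 20 * S5.card) + 3 * (∑ v ∈ I, inr v)
        + 24 * S4.card + 35 * S5.card := by
    rw [hpart Finset.univ (fun v => (G.degree v : ℤ) * inr v)]
    rw [← hLdef, ← hIdef, ← hS4def, ← hS5def]
    have eI : ∑ v ∈ I, (G.degree v : ℤ) * inr v = 3 * (∑ v ∈ I, inr v) := by
      rw [Finset.mul_sum]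
      apply Finset.sum_congr rfl
      intro v hv
      rw [hIdef, Finset.mem_filter] at hv
      rw [hv.2]
      norm_num
    have eS4 : ∑ v ∈ S4, (G.degree v : ℤ) * inr v = 24 * S4.card := by
      have : ∑ v ∈ S4, (G.degree v : ℤ) * inr v = ∑ v ∈ S4, (24 : ℤ) := by
        apply Finset.sum_congr rfl
        intro v hv
        rw [hS4def, Finset.mem_filter] at hv
        rw [hinner_stem v (Or.inl hv.2), hv.2]
        norm_num
      rw [this, Finset.sum_const, nsmul_eq_mul]
      ring
    have eS5 : ∑ v ∈ S5, (G.degree v : ℤ) * inr v = 35 * S5.card := by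
      have : ∑ v ∈ S5, (G.degree v : ℤ) * inr v = ∑ v ∈ S5, (35 : ℤ) := by
        apply Finset.sum_congr rfl
        intro v hv
        rw [hS5def, Finset.mem_filter] at hv
        rw [hinner_stem v (Or.inr hv.2), hv.2]
        norm_num
      rw [this, Finset.sum_const, nsmul_eq_mul]
      ring
    rw [hsumL, eI, eS4, eS5]
    try ring
  rw [hsplitall, hX] at h2M
  rw [hsumdeg, hcardV] at hhs
  linarith [h2M, hhs, hn345]

end Part2

end StemAux



/-- For any `n ≥ 9` there exists a tree with `n` pendent vertices in which each stem vertex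
(an internal vertex adjacent to a pendent vertex) has degree 4 or 5 and is adjacent to
exactly one internal vertex, and every non-stem internal vertex has degree 3; any such tree
satisfies `M₂(T) = 11n - 27`. -/
theorem stmt_15 (n : ℕ) (hn : 9 ≤ n) :
    (∃ (m : ℕ) (G : SimpleGraph (Fin m)),
      G.IsTree ∧ (Finset.univ.filter fun v => G.degree v = 1).card = n ∧
      (∀ v, 2 ≤ G.degree v → (∃ u, G.Adj v u ∧ G.degree u = 1) →
        (G.degree v = 4 ∨ G.degree v = 5) ∧
        (Finset.univ.filter fun u => G.Adj v u ∧ 2 ≤ G.degree u).card = 1) ∧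
      (∀ v, 2 ≤ G.degree v → ¬(∃ u, G.Adj v u ∧ G.degree u = 1) → G.degree v = 3)) ∧
    (∀ (V : Type) [Fintype V] [DecidableEq V] (G : SimpleGraph V) [DecidableRel G.Adj],
      G.IsTree → (Finset.univ.filter fun v => G.degree v = 1).card = n →
      (∀ v : V, 2 ≤ G.degree v → (∃ u, G.Adj v u ∧ G.degree u = 1) →
        (G.degree v = 4 ∨ G.degree v = 5) ∧
        (Finset.univ.filter fun u => G.Adj v u ∧ 2 ≤ G.degree u).card = 1) →
      (∀ v : V, 2 ≤ G.degree v → ¬(∃ u, G.Adj v u ∧ G.degree u = 1) → G.degree v = 3) →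
      ∑ e ∈ G.edgeFinset,
          Sym2.lift ⟨fun u v => (G.degree u : ℤ) * (G.degree v : ℤ),
            fun u v => mul_comm _ _⟩ e = 11 * (n : ℤ) - 27) := by
  constructor
  · exact StemAux.part1 n hn
  · intro V _ _ G _ hT hL hstem hint
    exact StemAux.part2 G n hn hT hL hstem hint
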